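/- Let D ≥ 1, let A, F : ℕ → ℝ≥0, and let Q, Q^e : ℕ → ℝ satisfy: for all t ≥ D, Q(t+1) = max(0, Q(t) + A(t) − F(t)) and Q^e(t−D+1) = Q^e(t−D) + A(t−D) − F(t) with Q^e nonnegative. Suppose at time t₀ ≥ D we have F(t₀) ≥ Q(t₀) + A(t₀) (so Q(t₀+1) = 0). Then for any t₁ > t₀ such that Q(t) > 0 for all t₀+1 < t ≤ t₁ (or trivially if t₁ = t₀+1), we have Q(t+1) ≤ Q^e(t−D+1) + ∑_{τ=t₀+1}^{t} (A(τ) − A(τ−D)) for all t₀ ≤ t < t₁. -/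
import Mathlib


open Finset

/-- Key step in the proof of Theorem 2: after the real queue empties, on any
interval where it stays positive the real-minus-emulated gap is bounded by the
telescoping sum of arrival differences. -/
theorem stmt9 (D : ℕ) (hD : 1 ≤ D) (A F : ℕ → ℝ) (Q Qe : ℕ → ℝ)
    (hA : ∀ t, 0 ≤ A t) (hF : ∀ t, 0 ≤ F t)
    (hQenonneg : ∀ t, 0 ≤ Qe t)
    (hQ : ∀ t, D ≤ t → Q (t + 1) = max 0 (Q t + A t - F t))
    (hQe : ∀ t, D ≤ t → Qe (t - D + 1) = Qe (t - D) + A (t - D) - F t)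
    (t₀ t₁ : ℕ) (ht₀ : D ≤ t₀) (ht₀t₁ : t₀ < t₁)
    (hempty : Q t₀ + A t₀ ≤ F t₀)
    (hpos : ∀ t, t₀ + 1 < t → t ≤ t₁ → 0 < Q t) :
    ∀ t, t₀ ≤ t → t < t₁ →
      Q (t + 1) ≤ Qe (t - D + 1) +
        ∑ τ ∈ Finset.Icc (t₀ + 1) t, (A τ - A (τ - D)) := by
  intro t
  induction t with
  | zero =>
    intro h0 _
    omega
  | succ s ih =>
    intro hle hlt
    rcases Nat.lt_or_ge t₀ (s + 1) with h | h
    · -- inductive case: t₀ ≤ s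
      have hst : t₀ ≤ s := Nat.lt_succ_iff.mp h
      have hIH := ih hst (Nat.lt_of_succ_lt hlt)
      have hDs : D ≤ s := le_trans ht₀ hst
      have hDs1 : D ≤ s + 1 := le_trans hDs (Nat.le_succ s)
      have hQpos : 0 < Q (s + 1 + 1) := by
        apply hpos
        · omega
        · omega
      have hQrec := hQ (s + 1) hDs1
      have hQval : Q (s + 1 + 1) = Q (s + 1) + A (s + 1) - F (s + 1) := by
        rw [hQrec] at hQpos ⊢
        rcases max_cases (0 : ℝ) (Q (s + 1) + A (s + 1) - F (s + 1)) with ⟨h1, h2⟩ | ⟨h1, _⟩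
        · rw [h1] at hQpos; linarith
        · exact h1
      have hQeRec := hQe (s + 1) hDs1
      have hsub : s + 1 - D = s - D + 1 := by omega
      rw [hsub] at hQeRec
      have hsum : ∑ τ ∈ Finset.Icc (t₀ + 1) (s + 1), (A τ - A (τ - D))
          = (∑ τ ∈ Finset.Icc (t₀ + 1) s, (A τ - A (τ - D))) + (A (s + 1) - A (s + 1 - D)) := by
        rw [← Finset.sum_Icc_succ_top (by omega : t₀ + 1 ≤ s + 1)]
      rw [hQval, hsum]
      simp only [hsub]
      rw [hQeRec]
      linarith
    · -- base case: t₀ = s + 1 (from hle : t₀ ≤ s + 1 and h : s + 1 ≤ t₀)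
      have ht0 : t₀ = s + 1 := le_antisymm hle h
      subst ht0
      have hQrec := hQ (s + 1) ht₀
      have hQ1 : Q (s + 1 + 1) = 0 := by
        rw [hQrec]
        apply max_eq_left
        linarith
      rw [hQ1]
      have : Finset.Icc (s + 1 + 1) (s + 1) = ∅ := Finset.Icc_eq_empty (by omega)
      rw [this, Finset.sum_empty, add_zero]
      exact hQenonneg _
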